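/- The polynomial p(x,y) = x(1+xy) has no real Jacobian mate: for every real polynomial q in two variables there exists a point v ∈ ℝ² at which the Jacobian determinant of (p,q) vanishes. -/

import Mathlib

open MvPolynomial Filter

/-- The Jacobian determinant of the polynomial map `(p, q) : ℝ² → ℝ²`. -/
noncomputable def Jac (p q : MvPolynomial (Fin 2) ℝ) (v : Fin 2 → ℝ) : ℝ :=
  eval v (pderiv 0 p * pderiv 1 q - pderiv 1 p * pderiv 0 q)

-- auxiliary lemmas
lemma curve_deriv (q : MvPolynomial (Fin 2) ℝ) (c0 c1 : ℝ → ℝ) (t d0 d1 : ℝ)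
    (h0 : HasDerivAt c0 d0 t) (h1 : HasDerivAt c1 d1 t) :
    HasDerivAt (fun s => eval ![c0 s, c1 s] q)
      (d0 * eval ![c0 t, c1 t] (pderiv 0 q) + d1 * eval ![c0 t, c1 t] (pderiv 1 q)) t := by
  induction q using MvPolynomial.induction_on with
  | C a => simpa using hasDerivAt_const t a
  | add p r hp hr =>
      have := hp.add hr
      simp only [map_add]
      refine this.congr_deriv ?_
      ring
  | mul_X p n hp =>
      fin_cases n
      · have := hp.mul h0
        simp only [map_mul, pderiv_X, Pi.single_eq_same, eval_X, eval_mul]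
        refine this.congr_deriv ?_
        simp only [pderiv_mul, eval_add, eval_mul, pderiv_X, eval_X]
        simp [Pi.single, Function.update]
        ring
      · have := hp.mul h1
        simp only [map_mul, pderiv_X, Pi.single_eq_same, eval_X, eval_mul]
        refine this.congr_deriv ?_
        simp only [pderiv_mul, eval_add, eval_mul, pderiv_X, eval_X]
        simp [Pi.single, Function.update]
        ring

lemma jac_eval (q : MvPolynomial (Fin 2) ℝ) (v : Fin 2 → ℝ) :
    Jac (X 0 + X 0 ^ 2 * X 1) q v
      = (1 + 2 * v 0 * v 1) * eval v (pderiv 1 q) - (v 0)^2 * eval v (pderiv 0 q) := by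
  simp [Jac, pderiv_mul, pderiv_X, Pi.single, Function.update, pow_two]
  ring_nf
  tauto

lemma eval_line (q : MvPolynomial (Fin 2) ℝ) :
    ∀ y : ℝ, Polynomial.eval y (aeval ![(0:Polynomial ℝ), Polynomial.X] q)
      = eval ![(0:ℝ), y] q := by
  induction q using MvPolynomial.induction_on with
  | C a => intro y; simp
  | add p r hp hr => intro y; simp [hp y, hr y]
  | mul_X p n hp => intro y; fin_cases n <;> simp [hp y]

lemma main_pos (q : MvPolynomial (Fin 2) ℝ)
    (H : ∀ v : Fin 2 → ℝ, 0 < Jac (X 0 + X 0 ^ 2 * X 1) q v) : False := by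
  set Qx : (Fin 2 → ℝ) → ℝ := fun v => eval v (pderiv 0 q) with hQx
  set Qy : (Fin 2 → ℝ) → ℝ := fun v => eval v (pderiv 1 q) with hQy
  have H' : ∀ x y : ℝ, 0 < (1 + 2*x*y) * Qy ![x,y] - x^2 * Qx ![x,y] := by
    intro x y
    have := H ![x,y]
    rw [jac_eval] at this
    simpa using this
  -- the function g(y) = q(0,y)
  set g : ℝ → ℝ := fun y => eval ![(0:ℝ), y] q with hgdef
  have hg : ∀ y : ℝ, HasDerivAt g (Qy ![0,y]) y := by
    intro y
    have := curve_deriv q (fun _ => 0) id y 0 1 (hasDerivAt_const y 0) (hasDerivAt_id y)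
    simpa using this
  have hgpos : ∀ y : ℝ, 0 < Qy ![0,y] := by
    intro y
    have := H' 0 y
    simpa using this
  have gmono : StrictMono g :=
    strictMono_of_deriv_pos (fun y => by rw [(hg y).deriv]; exact hgpos y)
  -- g comes from a univariate polynomial, unbounded below
  set P : Polynomial ℝ := aeval ![(0:Polynomial ℝ), Polynomial.X] q with hPdef
  have hP : ∀ y, Polynomial.eval y P = g y := eval_line q
  have hPdeg : 0 < P.natDegree := by
    rcases Nat.eq_zero_or_pos P.natDegree with h0 | h0
    · exfalso
      rcases Polynomial.natDegree_eq_zero.mp h0 with ⟨a, ha⟩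
      have h01 : g 0 < g 1 := gmono (by norm_num)
      rw [← hP 0, ← hP 1, ← ha] at h01
      simp at h01
    · exact h0
  set Q : Polynomial ℝ := P.comp (-Polynomial.X) with hQdef
  have hQeval : ∀ t : ℝ, Polynomial.eval t Q = g (-t) := by
    intro t
    rw [hQdef, Polynomial.eval_comp]
    simp [hP]
  have hQnat : Q.natDegree = P.natDegree := by
    rw [hQdef, Polynomial.natDegree_comp]; simp
  have hQdeg : 0 < Q.degree :=
    Polynomial.natDegree_pos_iff_degree_pos.mp (hQnat ▸ hPdeg)
  have habs : Tendsto (fun t => |Polynomial.eval t Q|) atTop atTop :=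
    Polynomial.abs_tendsto_atTop Q hQdeg
  set B : ℝ := eval ![(1:ℝ), -1] q with hBdef
  -- find y₀ with g y₀ < B
  obtain ⟨t, ht, ht0⟩ : ∃ t : ℝ, |Polynomial.eval t Q| > |B| + |g 0| ∧ 0 ≤ t := by
    have h1 : ∀ᶠ t : ℝ in atTop, |Polynomial.eval t Q| > |B| + |g 0| :=
      habs.eventually_gt_atTop _
    have h2 : ∀ᶠ t : ℝ in atTop, (0:ℝ) ≤ t := eventually_ge_atTop 0
    rcases (h1.and h2).exists with ⟨t, h⟩
    exact ⟨t, h.1, h.2⟩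
  set y₀ : ℝ := -t with hy₀
  have hgy₀B : g y₀ < B := by
    have h1 : g y₀ ≤ g 0 := gmono.monotone (by simp [hy₀]; linarith)
    have h2 : |g y₀| > |B| + |g 0| := by rw [← hQeval t] at *; simpa [hy₀] using ht
    rcases abs_cases (g y₀) with ⟨e1, _⟩ | ⟨e1, _⟩ <;>
      rcases abs_cases B with ⟨e2, _⟩ | ⟨e2, _⟩ <;>
      rcases abs_cases (g 0) with ⟨e3, _⟩ | ⟨e3, _⟩ <;> linarith
  -- the curves x -> q(x, (e-x)/x^2) are strictly decreasing on (0,oo)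
  have hGderiv : ∀ (ε x : ℝ), 0 < x →
      HasDerivAt (fun s => eval ![s, (ε - s)/s^2] q)
        (1 * Qx ![x, (ε - x)/x^2] +
          ((-1) * x^2 - (ε - x) * (2*x)) / (x^2)^2 * Qy ![x, (ε - x)/x^2]) x := by
    intro ε x hx
    have hnum : HasDerivAt (fun s : ℝ => ε - s) (-1) x := by
      simpa using (hasDerivAt_id' x).const_sub ε
    have hden : HasDerivAt (fun s : ℝ => s^2) (2*x) x := by
      simpa using hasDerivAt_pow 2 x
    have hdiv := hnum.div hden (pow_ne_zero 2 hx.ne')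
    have := curve_deriv q id (fun s => (ε - s)/s^2) x 1 _ (hasDerivAt_id x) hdiv
    simpa using this
  have hGneg : ∀ (ε x : ℝ), 0 < x →
      1 * Qx ![x, (ε - x)/x^2] +
        ((-1) * x^2 - (ε - x) * (2*x)) / (x^2)^2 * Qy ![x, (ε - x)/x^2] < 0 := by
    intro ε x hx
    have hx0 : x ≠ 0 := hx.ne'
    have hH := H' x ((ε - x)/x^2)
    set A := Qx ![x, (ε - x)/x^2] with hA
    set Bq := Qy ![x, (ε - x)/x^2] with hBq
    have key : x^4 * (1 * A + ((-1) * x^2 - (ε - x) * (2*x)) / (x^2)^2 * Bq)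
        = -(x^2 * ((1 + 2*x*((ε - x)/x^2)) * Bq - x^2 * A)) := by
      field_simp
      ring
    nlinarith [pow_pos hx 2, pow_pos hx 4, mul_pos (pow_pos hx 2) hH]
  have SA : ∀ ε : ℝ, StrictAntiOn (fun s => eval ![s, (ε - s)/s^2] q) (Set.Ioi 0) := by
    intro ε
    apply strictAntiOn_of_deriv_neg (convex_Ioi 0)
    · intro x hx
      exact ((hGderiv ε x hx).continuousAt).continuousWithinAt
    · intro x hx
      rw [interior_Ioi] at hx
      rw [(hGderiv ε x hx).deriv]
      exact hGneg ε x hx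
  have chain : ∀ x : ℝ, 0 < x → x < 1 →
      eval ![(1:ℝ), (x + y₀ * x^2) - 1] q < eval ![x, y₀] q := by
    intro x hx hx1
    have h := SA (x + y₀ * x^2) (Set.mem_Ioi.mpr hx) (Set.mem_Ioi.mpr one_pos) hx1
    simp only at h
    have e1 : (x + y₀ * x^2 - x)/x^2 = y₀ := by
      field_simp
      ring
    have e2 : (x + y₀ * x^2 - 1)/(1:ℝ)^2 = x + y₀ * x^2 - 1 := by norm_num
    rwa [e1, e2] at h
  -- pass to the limit x -> 0+
  set F : ℝ → ℝ := fun x => eval ![x, y₀] q with hFdef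
  set K : ℝ → ℝ := fun e => eval ![(1:ℝ), e - 1] q with hKdef
  have hFcont : ContinuousAt F 0 := by
    have := curve_deriv q id (fun _ => y₀) 0 1 0 (hasDerivAt_id 0) (hasDerivAt_const 0 y₀)
    exact this.continuousAt
  have hKcont : ContinuousAt K 0 := by
    have := curve_deriv q (fun _ => (1:ℝ)) (fun e => e - 1) 0 0 1 (hasDerivAt_const 0 1)
      (by simpa using (hasDerivAt_id (0:ℝ)).sub_const 1)
    exact this.continuousAt
  have hmap : Tendsto (fun x : ℝ => x + y₀ * x^2) (nhdsWithin 0 (Set.Ioi 0)) (nhds 0) := by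
    have hc : Continuous (fun x : ℝ => x + y₀ * x^2) := by continuity
    have h2 := hc.tendsto 0
    norm_num at h2
    exact h2.mono_left nhdsWithin_le_nhds
  have hKlim : Tendsto (fun x : ℝ => K (x + y₀ * x^2)) (nhdsWithin 0 (Set.Ioi 0)) (nhds (K 0)) :=
    hKcont.tendsto.comp hmap
  have hFlim : Tendsto F (nhdsWithin 0 (Set.Ioi 0)) (nhds (F 0)) :=
    hFcont.tendsto.mono_left nhdsWithin_le_nhds
  have hIoo : Set.Ioo (0:ℝ) 1 ∈ nhdsWithin (0:ℝ) (Set.Ioi 0) :=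
    Ioo_mem_nhdsGT_of_mem (by norm_num : (0:ℝ) ∈ Set.Ico (0:ℝ) 1)
  have hle : K 0 ≤ F 0 := by
    apply le_of_tendsto_of_tendsto hKlim hFlim
    filter_upwards [hIoo] with x hx
    exact (chain x hx.1 hx.2).le
  have hK0 : K 0 = B := by norm_num [hKdef, hBdef]
  have hF0 : F 0 = g y₀ := rfl
  rw [hK0, hF0] at hle
  linarith

lemma veta (v : Fin 2 → ℝ) : ![v 0, v 1] = v := by
  funext i; fin_cases i <;> simp

lemma jac_neg (p q : MvPolynomial (Fin 2) ℝ) (v : Fin 2 → ℝ) :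
    Jac p (-q) v = - Jac p q v := by
  unfold Jac
  rw [show pderiv 0 p * pderiv 1 (-q) - pderiv 1 p * pderiv 0 (-q)
      = -(pderiv 0 p * pderiv 1 q - pderiv 1 p * pderiv 0 q) by
    simp [map_neg]; ring]
  simp

/-- The polynomial `p(x,y) = x(1+xy) = x + x²y` has no real Jacobian mate: for every
real polynomial `q` in two variables the Jacobian determinant of `(p,q)` vanishes at
some point of `ℝ²`. -/
theorem no_jacobian_mate_x_mul_one_add_xy :
    ∀ q : MvPolynomial (Fin 2) ℝ,
      ∃ v : Fin 2 → ℝ, Jac (X 0 + X 0 ^ 2 * X 1) q v = 0 := by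
  intro q
  by_contra h
  push_neg at h
  set p : MvPolynomial (Fin 2) ℝ := X 0 + X 0 ^ 2 * X 1 with hp
  by_cases hpos : ∀ v : Fin 2 → ℝ, 0 < Jac p q v
  · exact main_pos q hpos
  push_neg at hpos
  obtain ⟨a, ha⟩ := hpos
  have ha' : Jac p q a < 0 := lt_of_le_of_ne ha (h a)
  by_cases hneg : ∀ v : Fin 2 → ℝ, Jac p q v < 0
  · apply main_pos (-q)
    intro v
    rw [jac_neg]
    linarith [hneg v]
  push_neg at hneg
  obtain ⟨b, hb⟩ := hneg
  have hb' : 0 < Jac p q b := lt_of_le_of_ne hb (Ne.symm (h b))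
  -- intermediate value along the segment from a to b
  set φ : ℝ → ℝ := fun t => Jac p q ![a 0 + t * (b 0 - a 0), a 1 + t * (b 1 - a 1)] with hφ
  have hφc : Continuous φ := by
    rw [continuous_iff_continuousAt]
    intro t
    have h0 : HasDerivAt (fun t : ℝ => a 0 + t * (b 0 - a 0)) (b 0 - a 0) t := by
      simpa using ((hasDerivAt_id t).mul_const (b 0 - a 0)).const_add (a 0)
    have h1 : HasDerivAt (fun t : ℝ => a 1 + t * (b 1 - a 1)) (b 1 - a 1) t := by
      simpa using ((hasDerivAt_id t).mul_const (b 1 - a 1)).const_add (a 1)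
    have hc := curve_deriv (pderiv 0 p * pderiv 1 q - pderiv 1 p * pderiv 0 q)
      (fun t : ℝ => a 0 + t * (b 0 - a 0)) (fun t : ℝ => a 1 + t * (b 1 - a 1)) t _ _ h0 h1
    exact hc.continuousAt
  have hφ0 : φ 0 = Jac p q a := by
    simp [hφ, veta a]
  have hφ1 : φ 1 = Jac p q b := by
    simp [hφ, veta b]
  have hmem : (0:ℝ) ∈ Set.Icc (φ 0) (φ 1) := by
    rw [hφ0, hφ1]; exact ⟨ha'.le, hb'.le⟩
  obtain ⟨t, _, ht⟩ := intermediate_value_Icc (zero_le_one) hφc.continuousOn hmem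
  exact h _ ht
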